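/- Suppose κ is inaccessible and H is an ideal on P_κ(λ) with cof(H) < cov(M_{κ,κ}), and let A ∈ H⁺. Then there is C ∈ H⁺ ∩ P(A) such that [C]_κ² = [C]_≺². -/

import Mathlib

open Cardinal Set

namespace PaperFormal

noncomputable section

/-- The least (small) cardinality of a family `F : Set X` satisfying `P`. -/
def leastCard {X : Type 1} (P : Set X → Prop) : Cardinal.{0} :=
  sInf {c : Cardinal.{0} | ∃ F : Set X, P F ∧ Cardinal.lift.{1} c = #F}

/-- The collection of (codings of) functions from `κ` to `κ`. -/
def funOn (κ : Cardinal.{0}) : Set (Ordinal.{0} → Ordinal.{0}) :=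
  {f | ∀ α < κ.ord, f α < κ.ord}

/-- The unequality number `U_κ`. -/
def uneq (κ : Cardinal.{0}) : Cardinal.{0} :=
  leastCard fun F : Set (Ordinal.{0} → Ordinal.{0}) => F ⊆ funOn κ ∧
    ∀ g ∈ funOn κ, ∃ f ∈ F, {α | α < κ.ord ∧ f α = g α} = ∅

/-- The dominating number `d_κ`. -/
def domNum (κ : Cardinal.{0}) : Cardinal.{0} :=
  leastCard fun F : Set (Ordinal.{0} → Ordinal.{0}) => F ⊆ funOn κ ∧
    ∀ g ∈ funOn κ, ∃ f ∈ F, ∀ α < κ.ord, g α < f α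

/-- The number `d̄_κ`. -/
def domBar (κ : Cardinal.{0}) : Cardinal.{0} :=
  leastCard fun X : Set (Ordinal.{0} → Ordinal.{0}) => X ⊆ funOn κ ∧
    ∀ g ∈ funOn κ, ∃ x ⊆ X, x.Nonempty ∧ #x < Cardinal.lift.{1} κ ∧
      ∀ α < κ.ord, g α < sSup {o | ∃ f ∈ x, f α = o}

/-- The generalized Cantor space `^ρ2`, with points coded as subsets of `Iio ρ.ord`. -/
def cantor (ρ : Cardinal.{0}) : Set (Set Ordinal.{0}) := {x | x ⊆ Iio ρ.ord}

/-- A forcing condition: a pair `(a, t)` with `t ⊆ a ⊆ Iio ρ.ord` and `|a| < ν`. -/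
def IsCond (ν ρ : Cardinal.{0}) (a t : Set Ordinal.{0}) : Prop :=
  a ⊆ Iio ρ.ord ∧ t ⊆ a ∧ #a < Cardinal.lift.{1} ν

/-- The basic open set determined by a condition. -/
def basicOpen (ρ : Cardinal.{0}) (a t : Set Ordinal.{0}) : Set (Set Ordinal.{0}) :=
  {x | x ⊆ Iio ρ.ord ∧ x ∩ a = t}

/-- Dense open subsets of `^ρ2` (for the `<ν`-support topology). -/
def DenseOpen (ν ρ : Cardinal.{0}) (D : Set (Set Ordinal.{0})) : Prop :=
  D ⊆ cantor ρ ∧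
  (∀ x ∈ D, ∃ a t, IsCond ν ρ a t ∧ x ∈ basicOpen ρ a t ∧ basicOpen ρ a t ⊆ D) ∧
  (∀ a t, IsCond ν ρ a t → (basicOpen ρ a t ∩ D).Nonempty)

/-- Members of `M_{ν,ρ}`. -/
def Meager (ν ρ : Cardinal.{0}) (W : Set (Set Ordinal.{0})) : Prop :=
  W ⊆ cantor ρ ∧ ∃ X : Set (Set (Set Ordinal.{0})), X.Nonempty ∧
    #X ≤ Cardinal.lift.{1} ν ∧ (∀ D ∈ X, DenseOpen ν ρ D) ∧ W ∩ ⋂₀ X = ∅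

/-- The covering number for category `cov(M_{ν,ρ})`. -/
def covM (ν ρ : Cardinal.{0}) : Cardinal.{0} :=
  leastCard fun Y : Set (Set (Set Ordinal.{0})) =>
    (∀ W ∈ Y, Meager ν ρ W) ∧ ⋃₀ Y = cantor ρ

/-- A (`κ`-complete) ideal on `κ`. -/
structure IdealK (κ : Cardinal.{0}) where
  mem : Set (Set Ordinal.{0})
  subset_iio : ∀ A ∈ mem, A ⊆ Iio κ.ord
  singleton_mem : ∀ α < κ.ord, {α} ∈ mem
  subset_mem : ∀ A ∈ mem, ∀ B ⊆ A, B ∈ mem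
  sUnion_mem : ∀ X : Set (Set Ordinal.{0}), X ⊆ mem → #X < Cardinal.lift.{1} κ → ⋃₀ X ∈ mem
  ne_top : Iio κ.ord ∉ mem

/-- `J⁺`, the sets (⊆ κ) not in the ideal. -/
def IdealK.plus {κ : Cardinal.{0}} (J : IdealK κ) : Set (Set Ordinal.{0}) :=
  {A | A ⊆ Iio κ.ord ∧ A ∉ J.mem}

/-- `cof(J)`. -/
def IdealK.cof {κ : Cardinal.{0}} (J : IdealK κ) : Cardinal.{0} :=
  leastCard fun X : Set (Set Ordinal.{0}) =>
    X ⊆ J.mem ∧ ∀ A, A ∈ J.mem ↔ ∃ B ∈ X, A ⊆ B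

/-- `cof̄(J)`. -/
def IdealK.cofBar {κ : Cardinal.{0}} (J : IdealK κ) : Cardinal.{0} :=
  leastCard fun X : Set (Set Ordinal.{0}) =>
    X ⊆ J.mem ∧ ∀ A ∈ J.mem, ∃ x ⊆ X, #x < Cardinal.lift.{1} κ ∧ A ⊆ ⋃₀ x

/-- `non_κ(P)`. -/
def nonK (κ : Cardinal.{0}) (P : IdealK κ → Prop) : Cardinal.{0} :=
  sInf {c | ∃ J : IdealK κ, J.cof = c ∧ ¬ P J}

/-- `non̄_κ(P)`. -/
def nonBarK (κ : Cardinal.{0}) (P : IdealK κ → Prop) : Cardinal.{0} :=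
  sInf {c | ∃ J : IdealK κ, J.cofBar = c ∧ ¬ P J}

/-- Weak `P`-point. -/
def WeakPPoint {κ : Cardinal.{0}} (J : IdealK κ) : Prop :=
  ∀ A ∈ J.plus, ∀ f : Ordinal.{0} → Ordinal.{0},
    (∀ α ∈ A, f α < κ.ord) → (∀ β, {α ∈ A | f α = β} ∈ J.mem) →
    ∃ B ∈ J.plus, B ⊆ A ∧ ∀ β, #{α ∈ B | f α = β} < Cardinal.lift.{1} κ

/-- Weak `Q`-point. -/
def WeakQPoint {κ : Cardinal.{0}} (J : IdealK κ) : Prop :=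
  ∀ A ∈ J.plus, ∀ g ∈ funOn κ,
    ∃ B ∈ J.plus, B ⊆ A ∧ ∀ α ∈ B, ∀ β ∈ B, α < β → g α < β

/-- Weakly selective ideal. -/
def WeaklySelective {κ : Cardinal.{0}} (J : IdealK κ) : Prop :=
  WeakPPoint J ∧ WeakQPoint J

/-- Weak semi-`Q`-point. -/
def WeakSemiQPoint {κ : Cardinal.{0}} (J : IdealK κ) : Prop :=
  ∀ A ∈ J.plus, ∀ f : Ordinal.{0} → Ordinal.{0},
    (∀ α ∈ A, f α < κ.ord) →
    (∀ β, #{α ∈ A | f α = β} < Cardinal.lift.{1} κ) →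
    ∃ C ∈ J.plus, C ⊆ A ∧ ∀ β < κ.ord, #{α ∈ C | f α = β} ≤ Cardinal.lift.{1} β.card

/-- `P_κ(λ)`, coded as the small subsets of `Iio λ.ord`. -/
def smallSet (κ lam : Cardinal.{0}) : Set (Set Ordinal.{0}) :=
  {a | a ⊆ Iio lam.ord ∧ #a < Cardinal.lift.{1} κ}

/-- The ideal `I_{κ,λ}` of noncofinal subsets of `P_κ(λ)`. -/
def Ikl (κ lam : Cardinal.{0}) : Set (Set (Set Ordinal.{0})) :=
  {A | A ⊆ smallSet κ lam ∧ ∃ a ∈ smallSet κ lam, ∀ b ∈ A, ¬ a ⊆ b}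

/-- A (`κ`-complete fine) ideal on `P_κ(λ)`. -/
structure IdealP (κ lam : Cardinal.{0}) where
  mem : Set (Set (Set Ordinal.{0}))
  subset_pk : ∀ A ∈ mem, A ⊆ smallSet κ lam
  fine : Ikl κ lam ⊆ mem
  subset_mem : ∀ A ∈ mem, ∀ B ⊆ A, B ∈ mem
  sUnion_mem : ∀ X : Set (Set (Set Ordinal.{0})), X ⊆ mem →
    #X < Cardinal.lift.{1} κ → ⋃₀ X ∈ mem
  ne_top : smallSet κ lam ∉ mem

/-- `H⁺` computed from the underlying collection `Hm` of an ideal on `P_κ(λ)`. -/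
def plusOf (κ lam : Cardinal.{0}) (Hm : Set (Set (Set Ordinal.{0}))) :
    Set (Set (Set Ordinal.{0})) :=
  {A | A ⊆ smallSet κ lam ∧ A ∉ Hm}

/-- `H⁺`. -/
def IdealP.plus {κ lam : Cardinal.{0}} (H : IdealP κ lam) : Set (Set (Set Ordinal.{0})) :=
  plusOf κ lam H.mem

/-- `cof(H)`. -/
def IdealP.cof {κ lam : Cardinal.{0}} (H : IdealP κ lam) : Cardinal.{0} :=
  leastCard fun X : Set (Set (Set Ordinal.{0})) =>
    X ⊆ H.mem ∧ ∀ A, A ∈ H.mem ↔ ∃ B ∈ X, A ⊆ B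

/-- `cof̄(H)`. -/
def IdealP.cofBar {κ lam : Cardinal.{0}} (H : IdealP κ lam) : Cardinal.{0} :=
  leastCard fun X : Set (Set (Set Ordinal.{0})) =>
    X ⊆ H.mem ∧ ∀ A ∈ H.mem, ∃ x ⊆ X, #x < Cardinal.lift.{1} κ ∧ A ⊆ ⋃₀ x

/-- `d^κ_{κ,λ}`. -/
def domP (κ lam : Cardinal.{0}) : Cardinal.{0} :=
  leastCard fun F : Set (Ordinal.{0} → Set Ordinal.{0}) =>
    (∀ f ∈ F, ∀ α < κ.ord, f α ∈ smallSet κ lam) ∧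
    ∀ g : Ordinal.{0} → Set Ordinal.{0}, (∀ α < κ.ord, g α ∈ smallSet κ lam) →
      ∃ f ∈ F, ∀ α < κ.ord, g α ⊆ f α

/-- A maximal almost disjoint family of size `≥ κ` for `H` (a member of `M_H^{≥κ}`). -/
def IsMad {κ lam : Cardinal.{0}} (H : IdealP κ lam) (Q : Set (Set (Set Ordinal.{0}))) : Prop :=
  Q ⊆ H.plus ∧ Cardinal.lift.{1} κ ≤ #Q ∧
  (∀ A ∈ Q, ∀ B ∈ Q, A ≠ B → A ∩ B ∈ H.mem) ∧
  ∀ C ∈ H.plus, ∃ A ∈ Q, A ∩ C ∈ H.plus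

/-- The (small) cardinal `c` with `lift c = c'`, used to pull `λ^{<κ} = |P_κ(λ)|` down. -/
def downCard (c : Cardinal.{1}) : Cardinal.{0} :=
  sInf {d : Cardinal.{0} | Cardinal.lift.{1} d = c}

open Classical in
/-- The number `a_H`. -/
def aNum {κ lam : Cardinal.{0}} (H : IdealP κ lam) : Cardinal.{0} :=
  if ∃ Q, IsMad H Q then sInf {c | ∃ Q, IsMad H Q ∧ Cardinal.lift.{1} c = #Q}
  else 2 ^ Order.succ (downCard #(smallSet κ lam))

/-- Weak `π`-point. -/
def WeakPiPoint {κ lam : Cardinal.{0}} (H : IdealP κ lam) : Prop :=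
  ∀ f : Ordinal.{0} → Set (Set Ordinal.{0}), (∀ α < κ.ord, f α ∈ H.mem) →
    ∀ A ∈ H.plus, ∃ B ∈ H.plus, B ⊆ A ∧ ∀ α < κ.ord, B ∩ f α ∈ Ikl κ lam

/-- `∪(a ∩ κ)`. -/
def supK (κ : Cardinal.{0}) (a : Set Ordinal.{0}) : Ordinal.{0} :=
  sSup (a ∩ Iio κ.ord)

/-- The relation `a ≺ b`. -/
def prec (κ : Cardinal.{0}) (a b : Set Ordinal.{0}) : Prop :=
  a ⊆ b ∧ supK κ a < supK κ b

/-- `[A]_κ²`. -/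
def pairsK (κ : Cardinal.{0}) (A : Set (Set Ordinal.{0})) : Set (Ordinal.{0} × Set Ordinal.{0}) :=
  {p | ∃ a ∈ A, ∃ b ∈ A, supK κ a < supK κ b ∧ p = (supK κ a, b)}

/-- `[A]_≺²`. -/
def pairsPrec (κ : Cardinal.{0}) (A : Set (Set Ordinal.{0})) :
    Set (Ordinal.{0} × Set Ordinal.{0}) :=
  {p | ∃ a ∈ A, ∃ b ∈ A, prec κ a b ∧ p = (supK κ a, b)}

/-- `[A]_{κ,κ}²`. -/
def pairsKK (κ : Cardinal.{0}) (A : Set (Set Ordinal.{0})) : Set (Ordinal.{0} × Ordinal.{0}) :=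
  {p | ∃ a ∈ A, ∃ b ∈ A, supK κ a < supK κ b ∧ p = (supK κ a, supK κ b)}

/-- `S` is a set of ordinals of order type `α`. -/
def OrdType (S : Set Ordinal.{0}) (α : Ordinal.{0}) : Prop :=
  ∃ e : Ordinal.{0} → Ordinal.{0},
    (∀ i < α, ∀ j < α, i < j → e i < e j) ∧ e '' Iio α = S

/-- `(B, ≺)` has order type `α`. -/
def OrdTypePrec (κ : Cardinal.{0}) (B : Set (Set Ordinal.{0})) (α : Ordinal.{0}) : Prop :=
  ∃ e : Ordinal.{0} → Set Ordinal.{0},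
    (∀ i < α, ∀ j < α, i < j → prec κ (e i) (e j)) ∧ e '' Iio α = B

/-- The partition relation `κ → (κ, θ)²`. -/
def ArrowKTheta (κ : Cardinal.{0}) (θ : Ordinal.{0}) : Prop :=
  ∀ f : Ordinal.{0} → Ordinal.{0} → Fin 2, ∃ A ⊆ Iio κ.ord,
    (OrdType A κ.ord ∧ ∀ α ∈ A, ∀ β ∈ A, α < β → f α β = 0) ∨
    (OrdType A θ ∧ ∀ α ∈ A, ∀ β ∈ A, α < β → f α β = 1)

/-- `κ` is weakly compact. -/
def WeaklyCompact (κ : Cardinal.{0}) : Prop :=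
  ∀ f : Ordinal.{0} → Ordinal.{0} → Fin 2, ∃ A ⊆ Iio κ.ord,
    OrdType A κ.ord ∧ ∃ i, ∀ α ∈ A, ∀ β ∈ A, α < β → f α β = i

/-- The partition relation `J⁺ → (J⁺, α)²` for an ideal on `κ`. -/
def ArrowJ {κ : Cardinal.{0}} (J : IdealK κ) (α : Ordinal.{0}) : Prop :=
  ∀ A ∈ J.plus, ∀ f : Ordinal.{0} → Ordinal.{0} → Fin 2,
    ∃ B ⊆ A, (B ∈ J.plus ∧ ∀ β ∈ B, ∀ γ ∈ B, β < γ → f β γ = 0) ∨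
             (OrdType B α ∧ ∀ β ∈ B, ∀ γ ∈ B, β < γ → f β γ = 1)

/-- The square bracket relation `J⁺ → [J⁺]_ρ²` for an ideal on `κ`. -/
def SqBrJ {κ : Cardinal.{0}} (J : IdealK κ) (ρ : Cardinal.{0}) : Prop :=
  ∀ A ∈ J.plus, ∀ f : Ordinal.{0} → Ordinal.{0} → Ordinal.{0},
    (∀ β ∈ A, ∀ γ ∈ A, β < γ → f β γ < ρ.ord) →
    ∃ B ∈ J.plus, B ⊆ A ∧ {ξ | ∃ β ∈ B, ∃ γ ∈ B, β < γ ∧ f β γ = ξ} ≠ Iio ρ.ord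

/-- `H⁺ →_κ (H⁺, α)²`. -/
def ArrowP (κ lam : Cardinal.{0}) (Hm : Set (Set (Set Ordinal.{0}))) (α : Ordinal.{0}) : Prop :=
  ∀ F : Ordinal.{0} → Set Ordinal.{0} → Fin 2, ∀ A ∈ plusOf κ lam Hm,
    ∃ B ⊆ A, (B ∈ plusOf κ lam Hm ∧ ∀ p ∈ pairsK κ B, F p.1 p.2 = 0) ∨
             (OrdTypePrec κ B α ∧ ∀ p ∈ pairsK κ B, F p.1 p.2 = 1)

/-- `H⁺ →_{κ,κ} (H⁺, α)²`. -/
def ArrowPKK (κ lam : Cardinal.{0}) (Hm : Set (Set (Set Ordinal.{0}))) (α : Ordinal.{0}) : Prop :=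
  ∀ F : Ordinal.{0} → Ordinal.{0} → Fin 2, ∀ A ∈ plusOf κ lam Hm,
    ∃ B ⊆ A, (B ∈ plusOf κ lam Hm ∧ ∀ p ∈ pairsKK κ B, F p.1 p.2 = 0) ∨
             (OrdTypePrec κ B α ∧ ∀ p ∈ pairsKK κ B, F p.1 p.2 = 1)

/-- `H⁺ →_{κ,κ} (H⁺; α)²`. -/
def ArrowPKKsemi (κ lam : Cardinal.{0}) (Hm : Set (Set (Set Ordinal.{0}))) (α : Ordinal.{0}) :
    Prop :=
  ∀ F : Ordinal.{0} → Ordinal.{0} → Fin 2, ∀ A ∈ plusOf κ lam Hm,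
    ∃ B ⊆ A, (B ∈ plusOf κ lam Hm ∧ ∀ p ∈ pairsKK κ B, F p.1 p.2 = 0) ∨
             (OrdType {o | ∃ a ∈ B, supK κ a = o} α ∧ ∀ p ∈ pairsKK κ B, F p.1 p.2 = 1)

/-- `H⁺ →_κ (H⁺)²`. -/
def ArrowPConst (κ lam : Cardinal.{0}) (Hm : Set (Set (Set Ordinal.{0}))) : Prop :=
  ∀ F : Ordinal.{0} → Set Ordinal.{0} → Fin 2, ∀ A ∈ plusOf κ lam Hm,
    ∃ B ∈ plusOf κ lam Hm, B ⊆ A ∧ ∃ i, ∀ p ∈ pairsK κ B, F p.1 p.2 = i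

/-- `H⁺ →_{κ,κ} [H⁺]_ρ²`. -/
def SqBrPKK (κ lam : Cardinal.{0}) (Hm : Set (Set (Set Ordinal.{0}))) (ρ : Cardinal.{0}) : Prop :=
  ∀ F : Ordinal.{0} → Ordinal.{0} → Ordinal.{0},
    (∀ α β : Ordinal.{0}, α < β → β < κ.ord → F α β < ρ.ord) →
    ∀ A ∈ plusOf κ lam Hm, ∃ B ∈ plusOf κ lam Hm, B ⊆ A ∧
      {ξ | ∃ p ∈ pairsKK κ B, F p.1 p.2 = ξ} ≠ Iio ρ.ord

/-- The class `K(κ,λ)`. -/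
def Kset (κ lam : Cardinal.{0}) : Set Cardinal.{0} :=
  {σ | lam ≤ σ ∧ ∃ T ⊆ smallSet κ lam, Cardinal.lift.{1} σ = #T ∧
    ∀ a ∈ smallSet κ lam, #{t ∈ T | t ⊆ a} < Cardinal.lift.{1} κ}

end

end PaperFormal

namespace PaperFormal


section Aux

open Classical

variable {κ lam : Cardinal.{0}}

/-- The set of candidate witnesses at level `β` above the accumulated set `u`. -/
def wsetD (κ : Cardinal.{0}) (A : Set (Set Ordinal.{0})) (u : Set Ordinal.{0})
    (β : Ordinal.{0}) : Set (Set Ordinal.{0}) :=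
  {w | w ∈ A ∧ supK κ w = β ∧ u ⊆ w}

/-- The activation/witness function, decoded from `x ⊆ κ` by recursion on levels. -/
noncomputable def act (κ : Cardinal.{0}) (A : Set (Set Ordinal.{0})) (x : Set Ordinal.{0}) :
    Ordinal.{0} → Option (Set Ordinal.{0}) :=
  WellFounded.fix Ordinal.lt_wf fun β ih =>
    if h : β ∈ x ∧ (wsetD κ A (⋃ p : Iio β, (ih p.1 p.2).getD ∅) β).Nonempty
    then some h.2.some else none

/-- The union of all witnesses at levels `< β`. -/
noncomputable def prevU (κ : Cardinal.{0}) (A : Set (Set Ordinal.{0})) (x : Set Ordinal.{0})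
    (β : Ordinal.{0}) : Set Ordinal.{0} :=
  ⋃ p : Iio β, (act κ A x p.1).getD ∅

theorem act_eq (κ : Cardinal.{0}) (A : Set (Set Ordinal.{0})) (x : Set Ordinal.{0})
    (β : Ordinal.{0}) :
    act κ A x β = if h : β ∈ x ∧ (wsetD κ A (prevU κ A x β) β).Nonempty
      then some h.2.some else none := by
  unfold act prevU
  exact WellFounded.fix_eq _ _ _

theorem act_some_spec {A : Set (Set Ordinal.{0})} {β : Ordinal.{0}} {w : Set Ordinal.{0}}
    {x : Set Ordinal.{0}} (h : act κ A x β = some w) :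
    (w ∈ A ∧ supK κ w = β ∧ prevU κ A x β ⊆ w) ∧ β ∈ x := by
  rw [act_eq] at h
  split at h
  case isTrue hc =>
    rw [Option.some.injEq] at h
    exact ⟨h ▸ hc.2.some_mem, hc.1⟩
  case isFalse hc => exact absurd h (by simp)

theorem act_subset_prevU {A : Set (Set Ordinal.{0})} {x : Set Ordinal.{0}}
    {β' β : Ordinal.{0}} {w' : Set Ordinal.{0}} (hlt : β' < β)
    (h : act κ A x β' = some w') : w' ⊆ prevU κ A x β := by
  intro o ho
  exact Set.mem_iUnion.2 ⟨⟨β', hlt⟩, by rw [h]; exact ho⟩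

theorem act_congr (κ : Cardinal.{0}) (A : Set (Set Ordinal.{0})) {x x' : Set Ordinal.{0}}
    {γ : Ordinal.{0}} (hxx : x ∩ Iio γ = x' ∩ Iio γ) :
    ∀ β < γ, act κ A x β = act κ A x' β := by
  intro β
  induction β using Ordinal.induction with
  | h β ih =>
    intro hβ
    have hu : prevU κ A x β = prevU κ A x' β := by
      unfold prevU
      exact Set.iUnion_congr fun p => by rw [ih p.1 p.2 (p.2.trans hβ)]
    have hm : (β ∈ x) = (β ∈ x') := by
      have h1 : β ∈ x ∩ Iio γ ↔ β ∈ x' ∩ Iio γ := by rw [hxx]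
      simp only [Set.mem_inter_iff, Set.mem_Iio, and_iff_left hβ] at h1
      exact propext h1
    rw [act_eq, act_eq, hu, hm]


theorem isRegular_lift (hreg : κ.IsRegular) : (Cardinal.lift.{1} κ).IsRegular := by
  constructor
  · exact Cardinal.aleph0_le_lift.2 hreg.1
  · rw [← Cardinal.lift_ord, ← Ordinal.lift_cof, hreg.cof_eq]

theorem sSup_lt_ord' (hreg : κ.IsRegular) {s : Set Ordinal.{0}}
    (hs : #s < Cardinal.lift.{1} κ) (hb : ∀ a ∈ s, a < κ.ord) : sSup s < κ.ord := by
  obtain ⟨c, hc⟩ := Cardinal.mem_range_lift_of_le hs.le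
  have hmk : #s = #(ULift.{1, 0} c.out) := by rw [Cardinal.mk_uLift, Cardinal.mk_out, hc]
  obtain ⟨e⟩ := Cardinal.eq.1 hmk
  have hrange : s = Set.range (fun i : c.out => ((e.symm (ULift.up i) : s) : Ordinal.{0})) := by
    ext o
    constructor
    · intro ho
      exact ⟨(e ⟨o, ho⟩).down, congrArg Subtype.val (e.symm_apply_apply ⟨o, ho⟩)⟩
    · rintro ⟨i, rfl⟩
      exact (e.symm (ULift.up i)).2
  rw [hrange]
  refine Cardinal.iSup_lt_ord_lift_of_isRegular hreg ?_ ?_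
  · rw [Cardinal.lift_id, Cardinal.mk_out]
    exact Cardinal.lift_lt.1 (hc ▸ hs)
  · exact fun i => hb _ (e.symm (ULift.up i)).2

theorem supK_lt (hreg : κ.IsRegular) {b : Set Ordinal.{0}} (hb : b ∈ smallSet κ lam) :
    supK κ b < κ.ord :=
  sSup_lt_ord' hreg (lt_of_le_of_lt
    (Cardinal.mk_le_mk_of_subset Set.inter_subset_left) hb.2) (fun _ ha => ha.2)

theorem le_supK {b : Set Ordinal.{0}} {β : Ordinal.{0}} (hβb : β ∈ b) (hβ : β < κ.ord) :
    β ≤ supK κ b :=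
  le_csSup ⟨κ.ord, fun _ hy => hy.2.le⟩ ⟨hβb, hβ⟩

theorem prevU_small (hreg : κ.IsRegular) {A : Set (Set Ordinal.{0})}
    (hA1 : A ⊆ smallSet κ lam) {x : Set Ordinal.{0}} {β : Ordinal.{0}} (hβ : β < κ.ord) :
    prevU κ A x β ∈ smallSet κ lam := by
  constructor
  · refine Set.iUnion_subset fun p => ?_
    cases h : act κ A x p.1 with
    | none => simp
    | some w =>
      simp only [Option.getD_some]
      exact (hA1 (act_some_spec h).1.1).1
  · refine lt_of_le_of_lt Cardinal.mk_iUnion_le_sum_mk ?_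
    refine Cardinal.sum_lt_of_isRegular (isRegular_lift hreg) ?_ ?_
    · rw [Ordinal.mk_Iio_ordinal]
      exact Cardinal.lift_lt.2 (Cardinal.lt_ord.1 hβ)
    · intro p
      cases h : act κ A x p.1 with
      | none => simp [Cardinal.aleph0_pos.trans_le (Cardinal.aleph0_le_lift.2 hreg.1)]
      | some w =>
        simp only [Option.getD_some]
        exact (hA1 (act_some_spec h).1.1).2


theorem pos_cofinal (H : IdealP κ lam) {T : Set (Set Ordinal.{0})} (hT : T ∈ H.plus)
    {a : Set Ordinal.{0}} (ha : a ∈ smallSet κ lam) : ∃ b ∈ T, a ⊆ b := by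
  by_contra h
  push_neg at h
  exact hT.2 (H.fine ⟨hT.1, a, ha, h⟩)

theorem diff_plus (hreg : κ.IsRegular) (H : IdealP κ lam) {A D : Set (Set Ordinal.{0})}
    (hA : A ∈ H.plus) (hD : D ∈ H.mem) : A \ D ∈ H.plus := by
  refine ⟨Set.diff_subset.trans hA.1, fun hmem => hA.2 ?_⟩
  have hX : ({A \ D, A ∩ D} : Set (Set (Set Ordinal.{0}))) ⊆ H.mem := by
    intro B hB
    rcases hB with h | h
    · exact h ▸ hmem
    · rw [Set.mem_singleton_iff] at h
      exact h ▸ H.subset_mem D hD _ Set.inter_subset_right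
  have hfin : ({A \ D, A ∩ D} : Set (Set (Set Ordinal.{0}))).Finite :=
    (Set.finite_singleton _).insert _
  have hU := H.sUnion_mem _ hX (hfin.lt_aleph0.trans_le (Cardinal.aleph0_le_lift.2 hreg.1))
  refine H.subset_mem _ hU A fun b hb => ?_
  by_cases hbD : b ∈ D
  · exact Set.mem_sUnion.2 ⟨A ∩ D, by simp, ⟨hb, hbD⟩⟩
  · exact Set.mem_sUnion.2 ⟨A \ D, by simp, ⟨hb, hbD⟩⟩

/-- The escape set for a member `D` of the ideal: the set of `x` whose decoded
structure admits an element of `A \ D` whose `supK`-level is active and which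
contains all earlier witnesses. -/
def escSet (κ : Cardinal.{0}) (A D : Set (Set Ordinal.{0})) : Set (Set Ordinal.{0}) :=
  {x | x ⊆ Iio κ.ord ∧ ∃ b ∈ A \ D, act κ A x (supK κ b) ≠ none ∧
    ∀ β' < supK κ b, ∀ w, act κ A x β' = some w → w ⊆ b}

theorem escSet_denseOpen (hreg : κ.IsRegular) (hlt : κ < lam) (H : IdealP κ lam)
    {A D : Set (Set Ordinal.{0})} (hA : A ∈ H.plus) (hD : D ∈ H.mem) :
    DenseOpen κ κ (escSet κ A D) := by
  have hA1 : A ⊆ smallSet κ lam := hA.1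
  have hlim : Order.IsSuccLimit κ.ord := Cardinal.isSuccLimit_ord hreg.1
  refine ⟨fun x hx => hx.1, ?_, ?_⟩
  · -- openness
    rintro x ⟨hxc, b, hbAD, hact, hwit⟩
    have hβ : supK κ b < κ.ord := supK_lt hreg (hA1 hbAD.1)
    set β := supK κ b with hβdef
    have hsucc : β + 1 < κ.ord := by
      rw [Ordinal.add_one_eq_succ]; exact hlim.succ_lt hβ
    refine ⟨Iio (β + 1), x ∩ Iio (β + 1),
      ⟨fun γ hγ => hγ.trans hsucc, Set.inter_subset_right, ?_⟩, ⟨hxc, rfl⟩, ?_⟩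
    · rw [Ordinal.mk_Iio_ordinal]
      exact Cardinal.lift_lt.2 (Cardinal.lt_ord.1 hsucc)
    · rintro x' ⟨hx'c, hx'a⟩
      have hcong := act_congr κ A (hx'a.trans rfl : x' ∩ Iio (β + 1) = x ∩ Iio (β + 1))
      refine ⟨hx'c, b, hbAD, ?_, ?_⟩
      · rw [hcong β (by rw [Ordinal.add_one_eq_succ]; exact Order.lt_succ β)]
        exact hact
      · intro β' hβ' w hw
        refine hwit β' hβ' w ?_
        rw [← hcong β' (hβ'.trans (by rw [Ordinal.add_one_eq_succ]; exact Order.lt_succ β))]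
        exact hw
  · -- density
    rintro a t ⟨hasub, htsub, hacard⟩
    have hsa : sSup a < κ.ord := sSup_lt_ord' hreg hacard (fun γ hγ => hasub hγ)
    set β₀ := sSup a + 1 with hβ₀def
    have hβ₀ : β₀ < κ.ord := by
      rw [hβ₀def, Ordinal.add_one_eq_succ]; exact hlim.succ_lt hsa
    have hssa : sSup a < β₀ := by
      rw [hβ₀def, Ordinal.add_one_eq_succ]; exact Order.lt_succ _
    have hbdd : BddAbove a := ⟨κ.ord, fun y hy => (hasub hy).le⟩
    have hta : ∀ γ ∈ t, γ < β₀ := fun γ hγ =>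
      lt_of_le_of_lt (le_csSup hbdd (htsub hγ)) hssa
    have hu : prevU κ A t β₀ ∈ smallSet κ lam := prevU_small hreg hA1 hβ₀
    have htarget : prevU κ A t β₀ ∪ {β₀} ∈ smallSet κ lam := by
      constructor
      · refine Set.union_subset hu.1 ?_
        intro γ hγ
        rw [Set.mem_singleton_iff] at hγ
        exact Set.mem_Iio.2 (hγ ▸ hβ₀.trans_le (Cardinal.ord_le_ord.2 hlt.le))
      · refine lt_of_le_of_lt (Cardinal.mk_union_le _ _) ?_
        refine Cardinal.add_lt_of_lt (Cardinal.aleph0_le_lift.2 hreg.1) hu.2 ?_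
        rw [Cardinal.mk_singleton]
        exact Cardinal.one_lt_aleph0.trans_le (Cardinal.aleph0_le_lift.2 hreg.1)
    obtain ⟨b, hbAD, hbsub⟩ := pos_cofinal H (diff_plus hreg H hA hD) htarget
    set β := supK κ b with hβdef
    have hβ₀β : β₀ ≤ β := le_supK (hbsub (Set.mem_union_right _ rfl)) hβ₀
    have hβκ : β < κ.ord := supK_lt hreg (hA1 hbAD.1)
    set x₀ : Set Ordinal.{0} := insert β t with hx₀def
    have hx₀c : x₀ ⊆ Iio κ.ord := Set.insert_subset hβκ (htsub.trans hasub)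
    have hagree : x₀ ∩ Iio β = t ∩ Iio β := by
      ext γ
      simp only [hx₀def, Set.mem_inter_iff, Set.mem_insert_iff, Set.mem_Iio]
      constructor
      · rintro ⟨rfl | hγt, hγβ⟩
        · exact absurd hγβ (lt_irrefl _)
        · exact ⟨hγt, hγβ⟩
      · rintro ⟨hγt, hγβ⟩
        exact ⟨Or.inr hγt, hγβ⟩
    have hcong := act_congr κ A hagree
    have hwitb : ∀ β' < β, ∀ w, act κ A x₀ β' = some w → w ⊆ b := by
      intro β' hβ' w hw
      rw [hcong β' hβ'] at hw
      have hβ't : β' ∈ t := (act_some_spec hw).2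
      have hsb : w ⊆ prevU κ A t β₀ := act_subset_prevU (hta β' hβ't) hw
      exact hsb.trans ((Set.subset_union_left).trans hbsub)
    have hactβ : act κ A x₀ β ≠ none := by
      rw [act_eq]
      have hprev : prevU κ A x₀ β ⊆ b := by
        refine Set.iUnion_subset fun p => ?_
        cases h : act κ A x₀ p.1 with
        | none => simp
        | some w =>
          simp only [Option.getD_some]
          exact hwitb p.1 p.2 w h
      have hc : β ∈ x₀ ∧ (wsetD κ A (prevU κ A x₀ β) β).Nonempty :=
        ⟨Set.mem_insert _ _, ⟨b, hbAD.1, rfl, hprev⟩⟩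
      rw [dif_pos hc]
      simp
    have hβa : β ∉ a := fun hβa =>
      absurd ((le_csSup hbdd hβa).trans_lt (hssa.trans_le hβ₀β)) (lt_irrefl _)
    refine ⟨x₀, ⟨hx₀c, ?_⟩, hx₀c, b, hbAD, hactβ, hwitb⟩
    ext γ
    simp only [hx₀def, Set.mem_inter_iff, Set.mem_insert_iff]
    constructor
    · rintro ⟨rfl | hγt, hγa⟩
      · exact absurd hγa hβa
      · exact hγt
    · intro hγt
      exact ⟨Or.inr hγt, htsub hγt⟩


theorem exists_cof_family (H : IdealP κ lam) :
    ∃ F : Set (Set (Set Ordinal.{0})),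
      (F ⊆ H.mem ∧ ∀ B, B ∈ H.mem ↔ ∃ B' ∈ F, B ⊆ B') ∧ Cardinal.lift.{1} H.cof = #F := by
  have hsmall : #H.mem ≤ Cardinal.lift.{1} ((2 : Cardinal.{0}) ^ ((2 : Cardinal.{0}) ^ lam)) := by
    calc #H.mem ≤ #(𝒫 (smallSet κ lam)) :=
          Cardinal.mk_le_mk_of_subset (fun T hT => H.subset_pk T hT)
      _ = (2 : Cardinal.{1}) ^ #(smallSet κ lam) := Cardinal.mk_powerset _
      _ ≤ (2 : Cardinal.{1}) ^ #(𝒫 (Iio lam.ord)) :=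
          Cardinal.power_le_power_left (by norm_num)
            (Cardinal.mk_le_mk_of_subset fun s hs => hs.1)
      _ = (2 : Cardinal.{1}) ^ ((2 : Cardinal.{1}) ^ #(Iio lam.ord)) := by rw [Cardinal.mk_powerset]
      _ = Cardinal.lift.{1} ((2 : Cardinal.{0}) ^ ((2 : Cardinal.{0}) ^ lam)) := by
          rw [Ordinal.mk_Iio_ordinal, Cardinal.card_ord, Cardinal.lift_two_power,
            Cardinal.lift_two_power]
  obtain ⟨c, hc⟩ := Cardinal.mem_range_lift_of_le hsmall
  have hne : {c : Cardinal.{0} | ∃ F : Set (Set (Set Ordinal.{0})),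
      (F ⊆ H.mem ∧ ∀ B, B ∈ H.mem ↔ ∃ B' ∈ F, B ⊆ B') ∧
      Cardinal.lift.{1} c = #F}.Nonempty := by
    refine ⟨c, H.mem, ⟨Set.Subset.rfl, fun B => ⟨fun h => ⟨B, h, Set.Subset.rfl⟩, ?_⟩⟩, hc⟩
    rintro ⟨B', h1, h2⟩
    exact H.subset_mem B' h1 B h2
  exact csInf_mem hne

end Aux

/-- Suppose `κ` is inaccessible and `H` is an ideal on `P_κ(λ)` with
`cof(H) < cov(M_{κ,κ})`, and let `A ∈ H⁺`. Then there is `C ∈ H⁺ ∩ P(A)` with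
`[C]_κ² = [C]_≺²`. -/
theorem pairsK_eq_pairsPrec (κ lam : Cardinal.{0}) (hreg : κ.IsRegular) (huc : ℵ₀ < κ)
    (hinacc : ∀ μ : Cardinal.{0}, μ < κ → 2 ^ μ < κ) (hlt : κ < lam)
    (H : IdealP κ lam) (hcof : H.cof < covM κ κ) (A : Set (Set Ordinal.{0}))
    (hA : A ∈ H.plus) :
    ∃ C ∈ H.plus, C ⊆ A ∧ pairsK κ C = pairsPrec κ C := by
  obtain ⟨F, ⟨hFsub, hFcof⟩, hFcard⟩ := exists_cof_family H
  -- find a generic point avoiding all the meager complements of the escape sets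
  have hgen : ∃ x ∈ cantor κ, ∀ D ∈ F, x ∈ escSet κ A D := by
    by_contra hcon
    push_neg at hcon
    set Y : Set (Set (Set Ordinal.{0})) := (fun D => cantor κ \ escSet κ A D) '' F with hYdef
    have hP : (∀ W ∈ Y, Meager κ κ W) ∧ ⋃₀ Y = cantor κ := by
      constructor
      · rintro W ⟨D, hDF, rfl⟩
        refine ⟨Set.diff_subset, {escSet κ A D}, Set.singleton_nonempty _, ?_, ?_, ?_⟩
        · rw [Cardinal.mk_singleton]
          exact le_trans Cardinal.one_le_aleph0 (Cardinal.aleph0_le_lift.2 hreg.1)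
        · intro E hE
          rw [Set.mem_singleton_iff] at hE
          exact hE ▸ escSet_denseOpen hreg hlt H hA (hFsub hDF)
        · rw [Set.sInter_singleton]
          exact Set.diff_inter_self
      · refine Set.Subset.antisymm (Set.sUnion_subset fun W hW => ?_) fun x hx => ?_
        · obtain ⟨D, _, rfl⟩ := hW
          exact Set.diff_subset
        · obtain ⟨D, hDF, hDx⟩ := hcon x hx
          exact ⟨cantor κ \ escSet κ A D, ⟨D, hDF, rfl⟩, hx, hDx⟩
    have hYcard : #Y ≤ Cardinal.lift.{1} H.cof := by
      rw [hFcard]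
      exact Cardinal.mk_image_le
    obtain ⟨c, hc⟩ := Cardinal.mem_range_lift_of_le hYcard
    have h1 : covM κ κ ≤ c := csInf_le (OrderBot.bddBelow _) ⟨Y, hP, hc⟩
    have h2 : c ≤ H.cof := Cardinal.lift_le.1 (hc ▸ hYcard)
    exact absurd hcof (not_lt.2 (h1.trans h2))
  obtain ⟨x, hxc, hxE⟩ := hgen
  refine ⟨{b | b ∈ A ∧ act κ A x (supK κ b) ≠ none ∧
      ∀ β' < supK κ b, ∀ w, act κ A x β' = some w → w ⊆ b}, ?_, fun b hb => hb.1, ?_⟩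
  · -- positivity
    refine ⟨fun b hb => hA.1 hb.1, fun hmem => ?_⟩
    obtain ⟨DD, hDDF, hCsub⟩ := (hFcof _).1 hmem
    obtain ⟨_, b, hbAD, h1, h2⟩ := hxE DD hDDF
    exact hbAD.2 (hCsub ⟨hbAD.1, h1, h2⟩)
  · -- the partition property
    apply Set.Subset.antisymm
    · rintro p ⟨a, haC, b, hbC, hab, rfl⟩
      obtain ⟨w, hw⟩ := Option.ne_none_iff_exists'.1 haC.2.1
      obtain ⟨⟨hwA, hwsup, hwprev⟩, -⟩ := act_some_spec hw
      have hwC : w ∈ {b | b ∈ A ∧ act κ A x (supK κ b) ≠ none ∧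
          ∀ β' < supK κ b, ∀ w', act κ A x β' = some w' → w' ⊆ b} := by
        refine ⟨hwA, ?_, ?_⟩
        · rw [hwsup]
          exact haC.2.1
        · intro β' hβ' w' hw'
          rw [hwsup] at hβ'
          exact (act_subset_prevU hβ' hw').trans hwprev
      have hwb : w ⊆ b := hbC.2.2 (supK κ a) hab w hw
      exact ⟨w, hwC, b, hbC, ⟨hwb, by rw [hwsup]; exact hab⟩, by rw [hwsup]⟩
    · rintro p ⟨a, haC, b, hbC, ⟨hsub, hlt'⟩, rfl⟩
      exact ⟨a, haC, b, hbC, hlt', rfl⟩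

end PaperFormal
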